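/- (Effective log-lift of the watchdog mechanism.) Let X be partitioned into disjoint sets B and A with p(A) > 0 and p(A|s) > 0 for all s ∈ S, and suppose p(x) > 0, p(x|s) > 0 and |log(p(x|s)/p(x))| ≤ ε for every x ∈ B and s ∈ S. Let R be a probability mass function on A and consider the watchdog mechanism releasing Y ∈ X with p_Y(y) = p(y) and p_Y(y|s) = p(y|s) for y ∈ B, and p_Y(y) = R(y) p(A) and p_Y(y|s) = R(y) p(A|s) for y ∈ A. Then, with ε^c = max_{s∈S} |log(p(A|s)/p(A))|, for every s ∈ S and every y ∈ X with p_Y(y) > 0 one has |log(p_Y(y|s)/p_Y(y))| ≤ max(ε, ε^c). -/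

import Mathlib

/-- Effective log-lift of the watchdog mechanism: `X` is
partitioned into `B` (published unperturbed, abs-log-lift at most `ε`) and `A`
(merged via an X-invariant pmf `R`); then the released variable `Y` satisfies
`|log(p_Y(y|s)/p_Y(y))| ≤ max(ε, ε^c)` for every `s` and every `y` with
`p_Y(y) > 0`, where `ε^c = max_{s∈S} |log(p(A|s)/p(A))|`. -/
theorem stmt_6 {S X : Type*} [Fintype S] [Fintype X] [DecidableEq X] [Nonempty S] [Nonempty X]
    (p : S → X → ℝ)
    (hp_nonneg : ∀ s x, 0 ≤ p s x)
    (hp_sum : ∑ s, ∑ x, p s x = 1)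
    (pS : S → ℝ) (hpS : ∀ s, pS s = ∑ x, p s x)
    (pX : X → ℝ) (hpX : ∀ x, pX x = ∑ s, p s x)
    (hpS_pos : ∀ s, 0 < pS s)
    (pXgS : S → X → ℝ) (hpXgS : ∀ s x, pXgS s x = p s x / pS s)
    (B A : Finset X) (hdisj : Disjoint B A) (hpart : B ∪ A = Finset.univ)
    (pA : ℝ) (hpA : pA = ∑ x ∈ A, pX x)
    (pAgS : S → ℝ) (hpAgS : ∀ s, pAgS s = ∑ x ∈ A, pXgS s x)
    (hA_pos : 0 < pA) (hAgS_pos : ∀ s, 0 < pAgS s)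
    (ε : ℝ)
    (hB_pos : ∀ x ∈ B, 0 < pX x)
    (hBgS_pos : ∀ s, ∀ x ∈ B, 0 < pXgS s x)
    (hB_lift : ∀ s, ∀ x ∈ B, |Real.log (pXgS s x / pX x)| ≤ ε)
    (R : X → ℝ) (hR_nonneg : ∀ y ∈ A, 0 ≤ R y) (hR_sum : ∑ y ∈ A, R y = 1)
    (pY : X → ℝ)
    (hpYB : ∀ y ∈ B, pY y = pX y)
    (hpYA : ∀ y ∈ A, pY y = R y * pA)
    (pYgS : S → X → ℝ)
    (hpYgSB : ∀ s, ∀ y ∈ B, pYgS s y = pXgS s y)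
    (hpYgSA : ∀ s, ∀ y ∈ A, pYgS s y = R y * pAgS s)
    (εc : ℝ)
    (hεc : εc = Finset.univ.sup' Finset.univ_nonempty
      (fun s : S => |Real.log (pAgS s / pA)|)) :
    ∀ s : S, ∀ y : X, 0 < pY y →
      |Real.log (pYgS s y / pY y)| ≤ max ε εc := by
  intro s y hy
  have hyu : y ∈ B ∪ A := hpart ▸ Finset.mem_univ y
  rcases Finset.mem_union.mp hyu with hB | hA
  · rw [hpYgSB s y hB, hpYB y hB]
    exact le_max_of_le_left (hB_lift s y hB)
  · have hRpos : 0 < R y := by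
      by_contra h
      have : R y = 0 := le_antisymm (not_lt.mp h) (hR_nonneg y hA)
      rw [hpYA y hA, this, zero_mul] at hy
      exact lt_irrefl 0 hy
    rw [hpYgSA s y hA, hpYA y hA]
    have : R y * pAgS s / (R y * pA) = pAgS s / pA := by
      field_simp
    rw [this]
    refine le_max_of_le_right ?_
    rw [hεc]
    exact Finset.le_sup' (fun s : S => |Real.log (pAgS s / pA)|) (Finset.mem_univ s)
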